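/- Let s, r, p ≥ 0 with s + r + p ≥ 1, and let n₁ ≤ ⋯ ≤ n_s, m₁ ≤ ⋯ ≤ m_r ≤ −1 and l₁ ≤ ⋯ ≤ l_p ≤ −1 be integers. Then the monomial x_{α₂}(n₁)⋯x_{α₂}(n_s)·x_{α₁}(m₁)⋯x_{α₁}(m_r)·x_{α₁+α₂}(l₁)⋯x_{α₁+α₂}(l_p) of U(n̄) is a ℂ-linear combination of monomials of the form x_{α₂}(m_{1,2})⋯x_{α₂}(m_{r₂,2})·x_{α₁}(m_{1,1})⋯x_{α₁}(m_{r₁,1}) with m_{1,2} ≤ ⋯ ≤ m_{r₂,2}, m_{1,1} ≤ ⋯ ≤ m_{r₁,1} ≤ −1 and total index sum equal to n₁ + ⋯ + n_s + m₁ + ⋯ + m_r + l₁ + ⋯ + l_p, plus an element of the left ideal U(n̄)n̄⁺. (That is, the factors x_{α₁+α₂}(·) can be eliminated.) -/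

import Mathlib

open scoped TensorProduct

attribute [local instance] LieRing.ofAssociativeRing

noncomputable section

/-- 3×3 complex matrices 𝔤𝔩(3,ℂ), with the commutator Lie bracket. -/
abbrev Mat3 : Type := Matrix (Fin 3) (Fin 3) ℂ

lemma upperTri_mul {a b : Mat3} (ha : ∀ i j : Fin 3, j ≤ i → a i j = 0)
    (hb : ∀ i j : Fin 3, j ≤ i → b i j = 0) :
    ∀ i j : Fin 3, j ≤ i → (a * b) i j = 0 := by
  intro i j hij
  rw [Matrix.mul_apply]
  refine Finset.sum_eq_zero fun k _ => ?_
  by_cases hk : k ≤ i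
  · rw [ha i k hk, zero_mul]
  · rw [hb k j (hij.trans (not_le.mp hk).le), mul_zero]

/-- The Lie algebra 𝔫 of strictly upper triangular 3×3 complex matrices. -/
def strictUpper : LieSubalgebra ℂ Mat3 where
  carrier := {M : Mat3 | ∀ i j : Fin 3, j ≤ i → M i j = 0}
  add_mem' := fun {a b} ha hb i j hij => by
    simp only [Matrix.add_apply, ha i j hij, hb i j hij, add_zero]
  zero_mem' := fun i j _ => rfl
  smul_mem' := fun c a ha i j hij => by
    simp only [Matrix.smul_apply, ha i j hij, smul_zero]
  lie_mem' := fun {a b} ha hb i j hij => by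
    rw [Ring.lie_def, Matrix.sub_apply, upperTri_mul ha hb i j hij,
      upperTri_mul hb ha i j hij, sub_zero]

/-- x_{α₁} = E₁₂ ∈ 𝔫. -/
def xa1 : strictUpper :=
  ⟨Matrix.single 0 1 1, by
    intro i j hij
    fin_cases i <;> fin_cases j <;> simp_all [Matrix.single, Matrix.of_apply]⟩

/-- x_{α₂} = E₂₃ ∈ 𝔫. -/
def xa2 : strictUpper :=
  ⟨Matrix.single 1 2 1, by
    intro i j hij
    fin_cases i <;> fin_cases j <;> simp_all [Matrix.single, Matrix.of_apply]⟩

/-- x_{α₁+α₂} = E₁₃ ∈ 𝔫. -/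
def xa12 : strictUpper :=
  ⟨Matrix.single 0 2 1, by
    intro i j hij
    fin_cases i <;> fin_cases j <;> simp_all [Matrix.single, Matrix.of_apply]⟩

/-- The loop algebra n̄ = ℂ[t,t⁻¹] ⊗_ℂ 𝔫, with bracket
`[tᵐ ⊗ x, tⁿ ⊗ y] = t^{m+n} ⊗ [x,y]`. -/
abbrev loopN : Type := LaurentPolynomial ℂ ⊗[ℂ] strictUpper

/-- n̄ is a Lie algebra over ℂ (by restriction of scalars from ℂ[t,t⁻¹]). -/
instance : LieAlgebra ℂ loopN where
  lie_smul c x y := by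
    rw [← algebraMap_smul (LaurentPolynomial ℂ) c y,
      ← algebraMap_smul (LaurentPolynomial ℂ) c ⁅x, y⁆]
    exact lie_smul ((algebraMap ℂ (LaurentPolynomial ℂ)) c) x y

/-- The universal enveloping algebra U(n̄) over ℂ. -/
abbrev Uenv : Type := UniversalEnvelopingAlgebra ℂ loopN

/-- x(m) = tᵐ ⊗ x, viewed as an element of U(n̄). -/
def XX (x : strictUpper) (m : ℤ) : Uenv :=
  UniversalEnvelopingAlgebra.ι ℂ (LaurentPolynomial.T m ⊗ₜ[ℂ] x)

/-- The ordered monomial x(m₁)⋯x(m_r) ∈ U(n̄) attached to a single root vector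
`a` and a sequence of integers `m`. -/
def monom {r : ℕ} (a : strictUpper) (m : Fin r → ℤ) : Uenv :=
  (List.ofFn fun i => XX a (m i)).prod

/-- The left ideal U(n̄)n̄⁺ of U(n̄), generated by the x(m) with x ∈ 𝔫, m ≥ 0. -/
def UNplus : Ideal Uenv :=
  Ideal.span {u : Uenv | ∃ (x : strictUpper) (m : ℤ), 0 ≤ m ∧ u = XX x m}

/-- The truncated relation R^{[j]}_{t;m} = Σ_{m₁,m₂ ≤ m, m₁+m₂=t} x_{α_j}(m₁)x_{α_j}(m₂)
(here `a` stands for the root vector x_{α_j}). -/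
def Rtrunc (a : strictUpper) (t m : ℤ) : Uenv :=
  ∑ k ∈ Finset.Icc (t - m) m, XX a k * XX a (t - k)

/-- The two-sided ideal 𝒥 of U(n̄) generated by all R^{[j]}_{t;m}, j ∈ {1,2}. -/
def Jideal : TwoSidedIdeal Uenv :=
  TwoSidedIdeal.span {u : Uenv | ∃ t m : ℤ, u = Rtrunc xa1 t m ∨ u = Rtrunc xa2 t m}

/-- The difference two condition on a sequence m₁, …, m_r. -/
def diffTwo {r : ℕ} (m : Fin r → ℤ) : Prop :=
  ∀ i j : Fin r, (i : ℕ) + 1 = (j : ℕ) → m i + 2 ≤ m j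


section AuxLemmas

open LaurentPolynomial

/-! ### Brackets of the basis vectors of 𝔫 -/

lemma lie_xa1_xa2 : ⁅xa1, xa2⁆ = xa12 := by
  apply Subtype.ext
  rw [LieSubalgebra.coe_bracket, Ring.lie_def]
  show Matrix.single 0 1 (1:ℂ) * Matrix.single 1 2 1
      - Matrix.single 1 2 1 * Matrix.single 0 1 1
      = Matrix.single 0 2 1
  rw [Matrix.single_mul_single_same,
    Matrix.single_mul_single_of_ne (i := 1) (j := 2) (c := (1:ℂ)) (k := 0)
      (by decide) 1, mul_one, sub_zero]

lemma lie_xa1_xa12 : ⁅xa1, xa12⁆ = 0 := by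
  apply Subtype.ext
  rw [LieSubalgebra.coe_bracket, Ring.lie_def, ZeroMemClass.coe_zero]
  show Matrix.single 0 1 (1:ℂ) * Matrix.single 0 2 1
      - Matrix.single 0 2 1 * Matrix.single 0 1 1 = 0
  rw [Matrix.single_mul_single_of_ne (i := 0) (j := 1) (c := (1:ℂ)) (k := 0)
      (by decide) 1,
    Matrix.single_mul_single_of_ne (i := 0) (j := 2) (c := (1:ℂ)) (k := 0)
      (by decide) 1, sub_zero]

lemma lie_xa2_xa12 : ⁅xa2, xa12⁆ = 0 := by
  apply Subtype.ext
  rw [LieSubalgebra.coe_bracket, Ring.lie_def, ZeroMemClass.coe_zero]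
  show Matrix.single 1 2 (1:ℂ) * Matrix.single 0 2 1
      - Matrix.single 0 2 1 * Matrix.single 1 2 1 = 0
  rw [Matrix.single_mul_single_of_ne (i := 1) (j := 2) (c := (1:ℂ)) (k := 0)
      (by decide) 1,
    Matrix.single_mul_single_of_ne (i := 0) (j := 2) (c := (1:ℂ)) (k := 1)
      (by decide) 1, sub_zero]

/-! ### Basic commutation relations among the `XX x m` in `Uenv` -/

lemma XX_sub (x y : strictUpper) (j k : ℤ) :
    XX x j * XX y k - XX y k * XX x j
      = UniversalEnvelopingAlgebra.ι ℂ ((T (j + k) : LaurentPolynomial ℂ) ⊗ₜ[ℂ] ⁅x, y⁆) := by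
  have h := (UniversalEnvelopingAlgebra.ι ℂ (L := loopN)).map_lie
      ((T j : LaurentPolynomial ℂ) ⊗ₜ[ℂ] x) ((T k : LaurentPolynomial ℂ) ⊗ₜ[ℂ] y)
  rw [LieAlgebra.ExtendScalars.bracket_tmul, ← T_add, Ring.lie_def] at h
  exact h.symm

lemma XX_commute0 {x y : strictUpper} (h : ⁅x, y⁆ = 0) (j k : ℤ) :
    Commute (XX x j) (XX y k) := by
  have h2 := XX_sub x y j k
  rw [h, TensorProduct.tmul_zero, map_zero] at h2
  exact sub_eq_zero.mp h2

lemma comm_11 : ∀ j k : ℤ, Commute (XX xa1 j) (XX xa1 k) :=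
  XX_commute0 (lie_self xa1)

lemma comm_22 : ∀ j k : ℤ, Commute (XX xa2 j) (XX xa2 k) :=
  XX_commute0 (lie_self xa2)

lemma comm_112 : ∀ j k : ℤ, Commute (XX xa1 j) (XX xa12 k) :=
  XX_commute0 lie_xa1_xa12

lemma comm_212 : ∀ j k : ℤ, Commute (XX xa2 j) (XX xa12 k) :=
  XX_commute0 lie_xa2_xa12

lemma comm_1212 : ∀ j k : ℤ, Commute (XX xa12 j) (XX xa12 k) :=
  XX_commute0 (lie_self xa12)

lemma XX12_eq (j k : ℤ) :
    XX xa12 (j + k) = XX xa1 j * XX xa2 k - XX xa2 k * XX xa1 j := by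
  have h2 := XX_sub xa1 xa2 j k
  rw [lie_xa1_xa2] at h2
  exact h2.symm

/-! ### Basic facts about `monom` -/

lemma monom_zero (a : strictUpper) (m : Fin 0 → ℤ) : monom a m = 1 := by
  simp [monom]

lemma monom_succ {r : ℕ} (a : strictUpper) (m : Fin (r + 1) → ℤ) :
    monom a m = XX a (m 0) * monom a (fun i => m i.succ) := by
  rw [monom, List.ofFn_succ, List.prod_cons]
  rfl

lemma monom_cons {r : ℕ} (a : strictUpper) (x : ℤ) (m : Fin r → ℤ) :
    monom a (Fin.cons x m) = XX a x * monom a m := by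
  rw [monom_succ]
  simp only [Fin.cons_zero, Fin.cons_succ]

lemma monom_snoc {r : ℕ} (a : strictUpper) (m : Fin r → ℤ) (x : ℤ) :
    monom a (Fin.snoc m x) = monom a m * XX a x := by
  rw [monom, List.ofFn_succ', List.concat_eq_append, List.prod_append, List.prod_singleton]
  simp only [Fin.snoc_castSucc, Fin.snoc_last]
  rfl

lemma commute_monom {a : strictUpper} {r : ℕ} (m : Fin r → ℤ) {y : Uenv}
    (h : ∀ k : ℤ, Commute y (XX a k)) : Commute y (monom a m) := by
  apply Commute.list_prod_right
  intro z hz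
  rw [List.mem_ofFn] at hz
  obtain ⟨i, rfl⟩ := hz
  exact h _

lemma monom_perm {a : strictUpper} (hc : ∀ j k : ℤ, Commute (XX a j) (XX a k))
    {r : ℕ} (m : Fin r → ℤ) (σ : Equiv.Perm (Fin r)) :
    monom a (fun i => m (σ i)) = monom a m := by
  apply List.Perm.prod_eq'
  · rw [← Multiset.coe_eq_coe, ← Fin.univ_val_map, ← Fin.univ_val_map]
    calc (Finset.univ.val.map fun i => XX a (m (σ i)))
        = ((Finset.univ.val.map (⇑σ)).map fun i => XX a (m i)) := by
          rw [Multiset.map_map]; rfl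
      _ = (Finset.univ.val.map fun i => XX a (m i)) := by
          rw [Multiset.map_univ_val_equiv]
  · rw [List.ofFn_eq_map, List.pairwise_map]
    exact List.Pairwise.imp (fun _ => hc _ _) (List.nodup_finRange r)

/-! ### Membership lemmas for `UNplus` -/

lemma XX_mem_UNplus {x : strictUpper} {k : ℤ} (hk : 0 ≤ k) : XX x k ∈ UNplus :=
  Ideal.subset_span ⟨x, k, hk, rfl⟩

/-! ### The auxiliary module of "central positive junk" -/

/-- The ℂ-span of the elements `monom xa1 f * XX xa12 c` with `c ≥ 0`. -/
def J0 : Submodule ℂ Uenv :=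
  Submodule.span ℂ
    {u : Uenv | ∃ (q : ℕ) (f : Fin q → ℤ) (c : ℤ), 0 ≤ c ∧ u = monom xa1 f * XX xa12 c}

lemma J0_left (k : ℤ) {u : Uenv} (hu : u ∈ J0) : XX xa1 k * u ∈ J0 := by
  have hmap : Submodule.map (LinearMap.mulLeft ℂ (XX xa1 k)) J0 ≤ J0 := by
    rw [J0, Submodule.map_span, Submodule.span_le]
    rintro _ ⟨u', ⟨q, f, c, hc, rfl⟩, rfl⟩
    apply Submodule.subset_span
    exact ⟨q + 1, Fin.cons k f, c, hc, by
      rw [monom_cons, LinearMap.mulLeft_apply, mul_assoc]⟩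
  exact hmap ⟨u, hu, rfl⟩

lemma J0_mul {u : Uenv} (hu : u ∈ J0) (a' : ℤ) {q : ℕ} (g : Fin q → ℤ) :
    u * (XX xa1 a' * monom xa12 g) ∈ UNplus := by
  have hmap : Submodule.map (LinearMap.mulRight ℂ (XX xa1 a' * monom xa12 g)) J0
      ≤ Submodule.restrictScalars ℂ UNplus := by
    rw [J0, Submodule.map_span, Submodule.span_le]
    rintro _ ⟨u', ⟨q', f, c, hc, rfl⟩, rfl⟩
    show (monom xa1 f * XX xa12 c) * (XX xa1 a' * monom xa12 g) ∈ UNplus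
    have hcm : Commute (XX xa12 c) (XX xa1 a' * monom xa12 g) :=
      Commute.mul_right ((comm_112 a' c).symm) (commute_monom g fun k => comm_1212 c k)
    rw [mul_assoc, hcm.eq, ← mul_assoc]
    exact Ideal.mul_mem_left _ _ (XX_mem_UNplus hc)
  exact hmap ⟨u, hu, rfl⟩

/-! ### The straightening identities -/

lemma aux_id {R : Type*} [Ring R] (X1 X2 X12 M : R)
    (h1 : X12 = X1 * X2 - X2 * X1) (h2 : X12 * M = M * X12) :
    (X1 * M) * X2 - X2 * (X1 * M) = M * X12 + X1 * (M * X2 - X2 * M) := by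
  rw [← h2, h1]
  noncomm_ring

lemma inner_swap : ∀ (r : ℕ) (m : Fin r → ℤ) (b : ℤ), (∀ i, 0 ≤ m i + b) →
    monom xa1 m * XX xa2 b - XX xa2 b * monom xa1 m ∈ J0 := by
  intro r
  induction r with
  | zero =>
    intro m b h
    simp only [monom_zero, one_mul, mul_one, sub_self]
    exact zero_mem _
  | succ r ih =>
    intro m b h
    have hE := ih (fun i => m i.succ) b (fun i => h i.succ)
    have h1 : XX xa12 (m 0 + b)
        = XX xa1 (m 0) * XX xa2 b - XX xa2 b * XX xa1 (m 0) := XX12_eq (m 0) b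
    have h2 : XX xa12 (m 0 + b) * monom xa1 (fun i => m i.succ)
        = monom xa1 (fun i => m i.succ) * XX xa12 (m 0 + b) :=
      ((commute_monom (fun i => m i.succ)
        (fun k => (comm_112 k (m 0 + b)).symm)).eq)
    rw [monom_succ, aux_id (XX xa1 (m 0)) (XX xa2 b) (XX xa12 (m 0 + b))
      (monom xa1 fun i => m i.succ) h1 h2]
    refine Submodule.add_mem _ ?_ (J0_left (m 0) hE)
    exact Submodule.subset_span ⟨r, (fun i => m i.succ), m 0 + b, h 0, rfl⟩

lemma aux_id2 {R : Type*} [Ring R] (N M X1 X2 L : R) (h : X2 * L = L * X2) :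
    N * M * ((X1 * X2 - X2 * X1) * L)
      = (N * M * X1 * L) * X2 - (N * X2) * (M * X1) * L
        - N * ((M * X2 - X2 * M) * (X1 * L)) := by
  rw [mul_assoc (N * M * X1) L X2, ← h]
  noncomm_ring

/-! ### The target submodule -/

/-- The set of straightened monomials with total degree `σ`. -/
abbrev Sset (sigma : ℤ) : Set Uenv :=
  {u : Uenv | ∃ (r2 r1 : ℕ) (m2 : Fin r2 → ℤ) (m1 : Fin r1 → ℤ),
      Monotone m2 ∧ Monotone m1 ∧ (∀ i, m1 i ≤ -1) ∧
      ((∑ i, m2 i) + ∑ i, m1 i = sigma) ∧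
      u = monom xa2 m2 * monom xa1 m1}

lemma mem_Sspan {s r : ℕ} (n : Fin s → ℤ) (m : Fin r → ℤ) (hm : ∀ i, m i ≤ -1)
    {sigma : ℤ} (hσ : (∑ i, n i) + ∑ i, m i = sigma) :
    monom xa2 n * monom xa1 m ∈ Submodule.span ℂ (Sset sigma) := by
  apply Submodule.subset_span
  refine ⟨s, r, fun i => n (Tuple.sort n i), fun i => m (Tuple.sort m i),
    Tuple.monotone_sort n, Tuple.monotone_sort m, fun i => hm _, ?_, ?_⟩
  · rw [Equiv.sum_comp (Tuple.sort n) n, Equiv.sum_comp (Tuple.sort m) m]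
    exact hσ
  · rw [monom_perm comm_22 n (Tuple.sort n), monom_perm comm_11 m (Tuple.sort m)]

/-- The target: straightened monomials of degree `σ` plus the left ideal `UNplus`. -/
def TT (sigma : ℤ) : Submodule ℂ Uenv :=
  Submodule.span ℂ (Sset sigma) ⊔ Submodule.restrictScalars ℂ UNplus

lemma main_lemma : ∀ (p : ℕ) (l : Fin p → ℤ), (∀ i, l i ≤ -1) →
    ∀ (s r : ℕ) (n : Fin s → ℤ) (m : Fin r → ℤ), (∀ i, m i ≤ -1) →
    monom xa2 n * monom xa1 m * monom xa12 l
      ∈ TT ((∑ i, n i) + (∑ i, m i) + ∑ i, l i) := by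
  intro p
  induction p with
  | zero =>
    intro l _ s r n m hm
    rw [monom_zero, mul_one]
    apply Submodule.mem_sup_left
    exact mem_Sspan n m hm (by simp)
  | succ p ih =>
    intro l hl s r n m hm
    have hl' : ∀ i : Fin p, (fun i => l i.succ) i ≤ -1 := fun i => hl i.succ
    set b : ℤ := ∑ i, -(m i) with hbdef
    have hb : 0 ≤ b := Finset.sum_nonneg fun i _ => by show 0 ≤ -(m i); linarith [hm i]
    have hmb : ∀ i, 0 ≤ m i + b := by
      intro i
      have h1 : -(m i) ≤ b :=
        Finset.single_le_sum (f := fun j => -(m j))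
          (fun j _ => by show 0 ≤ -(m j); linarith [hm j]) (Finset.mem_univ i)
      linarith
    set a : ℤ := l 0 - b with hadef
    have ha : a ≤ -1 := by have := hl 0; omega
    have hx : XX xa12 (l 0) = XX xa1 a * XX xa2 b - XX xa2 b * XX xa1 a := by
      have := XX12_eq a b
      rw [show a + b = l 0 by omega] at this
      exact this
    have hc1 : Commute (XX xa2 b) (monom xa12 (fun i => l i.succ)) :=
      commute_monom _ (fun k => comm_212 b k)
    have hsnocneg : ∀ i, (Fin.snoc m a : Fin (r + 1) → ℤ) i ≤ -1 := by
      intro i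
      refine Fin.lastCases ?_ ?_ i
      · simpa using ha
      · intro j; simpa using hm j
    have heq : monom xa2 n * monom xa1 m * monom xa12 l
        = (monom xa2 n * monom xa1 m * XX xa1 a * monom xa12 (fun i => l i.succ)) * XX xa2 b
          - monom xa2 (Fin.snoc n b) * monom xa1 (Fin.snoc m a)
              * monom xa12 (fun i => l i.succ)
          - monom xa2 n * ((monom xa1 m * XX xa2 b - XX xa2 b * monom xa1 m)
              * (XX xa1 a * monom xa12 (fun i => l i.succ))) := by
      rw [monom_succ xa12 l, hx, monom_snoc xa2 n b, monom_snoc xa1 m a]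
      exact aux_id2 (monom xa2 n) (monom xa1 m) (XX xa1 a) (XX xa2 b)
        (monom xa12 fun i => l i.succ) hc1.eq
    rw [heq]
    refine Submodule.sub_mem _ (Submodule.sub_mem _ ?_ ?_) ?_
    · apply Submodule.mem_sup_right
      exact Ideal.mul_mem_left _ _ (XX_mem_UNplus hb)
    · have hIH := ih (fun i => l i.succ) hl' (s + 1) (r + 1)
        (Fin.snoc n b) (Fin.snoc m a) hsnocneg
      have hσ' : (∑ i, (Fin.snoc n b : Fin (s + 1) → ℤ) i)
            + (∑ i, (Fin.snoc m a : Fin (r + 1) → ℤ) i)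
            + (∑ i : Fin p, l i.succ)
          = (∑ i, n i) + (∑ i, m i) + ∑ i, l i := by
        rw [Fin.sum_univ_castSucc (f := Fin.snoc n b),
          Fin.sum_univ_castSucc (f := Fin.snoc m a), Fin.sum_univ_succ l]
        simp only [Fin.snoc_castSucc, Fin.snoc_last]
        linarith [hadef]
      rw [hσ'] at hIH
      exact hIH
    · apply Submodule.mem_sup_right
      exact Ideal.mul_mem_left _ _ (J0_mul (inner_swap r m b hmb) a _)

end AuxLemmas

/-- Remark 3.3 of the paper (elimination of the x_{α₁+α₂} factors): a monomial
`x_{α₂}(n₁)⋯x_{α₂}(n_s)x_{α₁}(m₁)⋯x_{α₁}(m_r)x_{α₁+α₂}(l₁)⋯x_{α₁+α₂}(l_p)`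
with `n₁ ≤ ⋯ ≤ n_s`, `m₁ ≤ ⋯ ≤ m_r ≤ −1`, `l₁ ≤ ⋯ ≤ l_p ≤ −1` is a ℂ-linear
combination of monomials `x_{α₂}(m_{1,2})⋯x_{α₂}(m_{r₂,2})x_{α₁}(m_{1,1})⋯x_{α₁}(m_{r₁,1})`
with `m_{1,2} ≤ ⋯ ≤ m_{r₂,2}`, `m_{1,1} ≤ ⋯ ≤ m_{r₁,1} ≤ −1` and the same total
index sum, plus an element of U(n̄)n̄⁺. -/
theorem statement11 (s r p : ℕ) (hsrp : 1 ≤ s + r + p)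
    (nseq : Fin s → ℤ) (m : Fin r → ℤ) (lseq : Fin p → ℤ)
    (hn : Monotone nseq) (hm : Monotone m) (hl : Monotone lseq)
    (hmneg : ∀ i, m i ≤ -1) (hlneg : ∀ i, lseq i ≤ -1) :
    ∃ v ∈ Submodule.span ℂ {u : Uenv |
        ∃ (r2 r1 : ℕ) (m2 : Fin r2 → ℤ) (m1 : Fin r1 → ℤ),
          Monotone m2 ∧ Monotone m1 ∧ (∀ i, m1 i ≤ -1) ∧
          ((∑ i, m2 i) + ∑ i, m1 i = (∑ i, nseq i) + (∑ i, m i) + ∑ i, lseq i) ∧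
          u = monom xa2 m2 * monom xa1 m1},
      ∃ w ∈ UNplus,
        monom xa2 nseq * monom xa1 m * monom xa12 lseq = v + w := by
  have h := main_lemma p lseq hlneg s r nseq m hmneg
  obtain ⟨v, hv, w, hw, hvw⟩ := Submodule.mem_sup.mp h
  exact ⟨v, hv, w, hw, hvw.symm⟩

end
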